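/- Suppose formal power series f, x, y, z over ℚ satisfy f = t + x + y, x = (f−z)², y = (f−z)(t+y)t, z = (f−z)(x−z), with f, x, y, z having zero constant term. Then y = t²f. -/

import Mathlib

open PowerSeries

/-- If `f, x, y, z ∈ ℚ[[t]]` have zero constant terms and satisfy the system
`f = t + x + y`, `x = (f−z)²`, `y = (f−z)(t+y)t`, `z = (f−z)(x−z)`, then
`y = t²·f`. -/
theorem system_implies_y_eq (f x y z : PowerSeries ℚ)
    (hf0 : constantCoeff f = 0) (hx0 : constantCoeff x = 0)
    (hy0 : constantCoeff y = 0) (hz0 : constantCoeff z = 0)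
    (h1 : f = X + x + y)
    (h2 : x = (f - z)^2)
    (h3 : y = (f - z) * (X + y) * X)
    (h4 : z = (f - z) * (x - z)) :
    y = X^2 * f := by
  -- abbreviate g := f - z implicitly
  have hB : y * (1 - (f - z) * X) = (f - z) * X ^ 2 := by linear_combination h3
  have hC : z * (1 + (f - z)) = (f - z) ^ 3 := by linear_combination h4 + (f - z) * h2
  have hP : f - z = X + X * (f - z) + X * (f - z) ^ 2 := by
    linear_combination ((1 + (f - z)) * (1 - (f - z) * X)) * h1 + (1 - (f - z) * X) * h2 +
      (1 + (f - z)) * h3 - (1 - (f - z) * X) * h4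
  have hne1 : (1 + (f - z) : PowerSeries ℚ) ≠ 0 := by
    intro h
    have := congrArg (constantCoeff) h
    simp [hf0, hz0] at this
  have hne2 : (1 - (f - z) * X : PowerSeries ℚ) ≠ 0 := by
    intro h
    have := congrArg (constantCoeff) h
    simp [hf0, hz0] at this
  have hfU : f * (1 + (f - z)) * X = (f - z) ^ 2 := by
    linear_combination X * hC - (f - z) * hP
  have hz' : z = f * (f - z) * X := by
    have h0 : (z - f * (f - z) * X) * (1 + (f - z)) = 0 := by
      linear_combination hC - (f - z) * hfU
    have := mul_eq_zero.mp h0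
    rcases this with h | h
    · exact sub_eq_zero.mp h
    · exact absurd h hne1
  have h0 : (y - X ^ 2 * f) * (1 - (f - z) * X) = 0 := by
    linear_combination hB - X ^ 2 * hz'
  rcases mul_eq_zero.mp h0 with h | h
  · exact sub_eq_zero.mp h
  · exact absurd h hne2
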